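/- Let Λ = [0,1]^d be the d-dimensional torus, λ:Λ→(0,∞) continuous, and let ρ:Λ→[0,∞) be integrable. Then the Legendre transform of f↦∫_Λ λ(e^f − 1) dx evaluated at ρ, namely V(ρ) = sup over continuous f:Λ→ℝ of [ ∫_Λ f ρ dx − ∫_Λ λ(e^f − 1) dx ], equals ∫_Λ [ ρ(x) log ρ(x) − λ(x) log λ(x) − (log λ(x) + 1)(ρ(x) − λ(x)) ] dx = ∫_Λ [ ρ(x) log(ρ(x)/λ(x)) − ρ(x) + λ(x) ] dx, as an equality in [0,+∞] (with the convention 0·log 0 = 0). Moreover V(ρ)=0 if and only if ρ(x)=λ(x) for almost every x. -/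

import Mathlib

open scoped ENNReal NNReal
open MeasureTheory

/-- Legendre pointwise upper bound. -/
lemma key_ineq (r l t : ℝ) (hr : 0 ≤ r) (hl : 0 < l) :
    t * r - l * (Real.exp t - 1) ≤ r * Real.log (r / l) - r + l := by
  rcases hr.eq_or_lt with h0 | h0
  · rw [← h0]
    nlinarith [Real.exp_pos t]
  · have hrl : 0 < r / l := div_pos h0 hl
    have h1 : l * Real.exp (Real.log (r / l)) = r := by
      rw [Real.exp_log hrl]; field_simp
    have h2 := Real.add_one_le_exp (t - Real.log (r / l))
    have h4 : l * Real.exp t = r * Real.exp (t - Real.log (r / l)) := by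
      rw [Real.exp_sub, Real.exp_log hrl]
      field_simp
    nlinarith [mul_le_mul_of_nonneg_left h2 h0.le]

/-- Equality of two forms of the integrand. -/
lemma forms_eq (r l : ℝ) (hr : 0 ≤ r) (hl : 0 < l) :
    r * Real.log r - l * Real.log l - (Real.log l + 1) * (r - l)
      = r * Real.log (r / l) - r + l := by
  rcases hr.eq_or_lt with h0 | h0
  · rw [← h0]; simp; ring
  · rw [Real.log_div h0.ne' hl.ne']; ring

/-- Nonnegativity of the integrand. -/
lemma g_nonneg (r l : ℝ) (hr : 0 ≤ r) (hl : 0 < l) :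
    0 ≤ r * Real.log (r / l) - r + l := by
  have := key_ineq r l 0 hr hl
  simpa using this

/-- Vanishing iff r = l. -/
lemma g_eq_zero_iff (r l : ℝ) (hr : 0 ≤ r) (hl : 0 < l) :
    r * Real.log (r / l) - r + l = 0 ↔ r = l := by
  constructor
  · intro h
    by_contra hne
    rcases hr.eq_or_lt with h0 | h0
    · rw [← h0] at h; simp at h; linarith
    · have hrl : 0 < r / l := div_pos h0 hl
      have hne1 : r / l ≠ 1 := by
        intro h1; exact hne (by field_simp at h1; linarith)
      have hlt := Real.log_lt_sub_one_of_pos (x := l / r) (div_pos hl h0) (by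
        intro h1; apply hne1; field_simp at h1 ⊢; linarith)
      rw [Real.log_div hl.ne' h0.ne'] at hlt
      have hld : Real.log (r / l) = Real.log r - Real.log l := Real.log_div h0.ne' hl.ne'
      -- log l - log r < l/r - 1  →  log(r/l) > 1 - l/r → r log(r/l) > r - l
      have : r * Real.log (r / l) > r - l := by
        rw [hld]
        have := mul_lt_mul_of_pos_left hlt h0
        have hlr : r * (l / r) = l := by field_simp
        nlinarith
      linarith
  · intro h
    subst h
    simp [div_self hl.ne']

lemma exp_lb (s t : ℝ) : Real.exp s * (t - s + 1) ≤ Real.exp t := by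
  have h := Real.add_one_le_exp (t - s)
  have h2 := mul_le_mul_of_nonneg_left h (Real.exp_pos s).le
  rw [← Real.exp_add] at h2
  calc Real.exp s * (t - s + 1) ≤ Real.exp (s + (t - s)) := h2
    _ = Real.exp t := by ring_nf

lemma phi_mono_left (r l s t : ℝ) (hl : 0 < l) (hts : t ≤ s) (hs : l * Real.exp s ≤ r) :
    t * r - l * (Real.exp t - 1) ≤ s * r - l * (Real.exp s - 1) := by
  have h := exp_lb s t
  nlinarith [mul_le_mul_of_nonneg_left h hl.le]

lemma phi_mono_right (r l s t : ℝ) (hl : 0 < l) (hst : s ≤ t) (hs : r ≤ l * Real.exp s) :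
    t * r - l * (Real.exp t - 1) ≤ s * r - l * (Real.exp s - 1) := by
  have h := exp_lb s t
  nlinarith [mul_le_mul_of_nonneg_left h hl.le]

lemma exp_lip (a b c : ℝ) (ha : a ≤ c) (hb : b ≤ c) :
    |Real.exp a - Real.exp b| ≤ Real.exp c * |a - b| := by
  have hac := Real.exp_le_exp.mpr ha
  have hbc := Real.exp_le_exp.mpr hb
  rcases le_total a b with h | h
  · rw [abs_of_nonpos (by simp [Real.exp_le_exp, h]), abs_of_nonpos (by linarith)]
    nlinarith [exp_lb b a]
  · rw [abs_of_nonneg (by simp [Real.exp_le_exp, h]), abs_of_nonneg (by linarith)]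
    nlinarith [exp_lb a b]

lemma clamp_mem (a c : ℝ) (hc : 0 ≤ c) : |max (-c) (min c a)| ≤ c := by
  rw [abs_le]
  constructor
  · exact le_max_left _ _
  · exact max_le (by linarith) (min_le_left _ _)

lemma clamp_close (a b c : ℝ) (hb : |b| ≤ c) : |max (-c) (min c a) - b| ≤ |a - b| := by
  rw [abs_le] at hb
  rcases le_total c a with h | h
  · have h1 : min c a = c := min_eq_left h
    have h2 : max (-c) c = c := max_eq_right (by linarith)
    rw [h1, h2, abs_of_nonneg (by linarith), abs_of_nonneg (by linarith)]
    linarith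
  · have h1 : min c a = a := min_eq_right h
    rw [h1]
    rcases le_total a (-c) with h3 | h3
    · rw [max_eq_left h3, abs_of_nonpos (by linarith), abs_of_nonpos (by linarith)]
      linarith
    · rw [max_eq_right h3]

open MeasureTheory in
lemma lower_aux (d : ℕ)
    (lam : (Fin d → AddCircle (1 : ℝ)) → ℝ)
    (hlam_cont : Continuous lam) (hlam_pos : ∀ x, 0 < lam x)
    (ρ : (Fin d → AddCircle (1 : ℝ)) → ℝ)
    (hρ_meas : Measurable ρ) (hρ_nonneg : ∀ x, 0 ≤ ρ x)
    (hρ_int : Integrable ρ)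
    (φ : (Fin d → AddCircle (1 : ℝ)) → ℝ) (hφ : Measurable φ)
    (n : ℝ) (hn : 0 ≤ n) (hbd : ∀ x, |φ x| ≤ n) :
    ENNReal.ofReal (∫ x, (φ x * ρ x - lam x * (Real.exp (φ x) - 1)))
      ≤ ⨆ f : C(Fin d → AddCircle (1 : ℝ), ℝ),
        ENNReal.ofReal ((∫ x, f x * ρ x) - ∫ x, lam x * (Real.exp (f x) - 1)) := by
  apply ENNReal.le_of_forall_pos_le_add
  intro ε hε _
  -- bound on lam
  have hne : Nonempty (Fin d → AddCircle (1 : ℝ)) := ⟨fun _ => 0⟩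
  obtain ⟨M, hM⟩ := (isCompact_range hlam_cont).bddAbove
  have hMx : ∀ x, lam x ≤ M := fun x => hM ⟨x, rfl⟩
  have hM0 : 0 < M := lt_of_lt_of_le (hlam_pos hne.some) (hMx hne.some)
  set K : ℝ := 1 + M * Real.exp n with hK_def
  have hK : 0 < K := by positivity
  set δ : ℝ := (ε : ℝ) / K with hδ_def
  have hδ : 0 < δ := div_pos hε hK
  -- the auxiliary measure
  set ν : Measure (Fin d → AddCircle (1 : ℝ)) :=
    volume.withDensity (fun x => ((ρ x).toNNReal : ENNReal)) with hν_def
  have hν_fin : IsFiniteMeasure ν := by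
    constructor
    rw [hν_def, withDensity_apply _ MeasurableSet.univ, setLIntegral_univ]
    have : (∫⁻ x, ((ρ x).toNNReal : ENNReal)) = ∫⁻ x, (‖ρ x‖₊ : ENNReal) := by
      apply lintegral_congr
      intro x
      congr 1
      rw [Real.toNNReal_eq_nnnorm_of_nonneg (hρ_nonneg x)]
    rw [this]
    exact hρ_int.2
  set μ : Measure (Fin d → AddCircle (1 : ℝ)) := volume + ν with hμ_def
  have hμ_fin : IsFiniteMeasure μ := by
    constructor
    rw [hμ_def, Measure.add_apply]
    exact ENNReal.add_lt_top.mpr ⟨measure_lt_top _ _, measure_lt_top _ _⟩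
  have hφμ : Integrable φ μ :=
    (integrable_const n).mono' hφ.aestronglyMeasurable
      (Filter.Eventually.of_forall fun x => by simpa using hbd x)
  obtain ⟨g0, hg0, hg0i⟩ := hφμ.exists_boundedContinuous_integral_sub_le hδ
  -- clamp g0
  set ψ : (Fin d → AddCircle (1 : ℝ)) → ℝ := fun x => max (-n) (min n (g0 x)) with hψ_def
  have hψc : Continuous ψ := continuous_const.max (continuous_const.min g0.continuous)
  have hψbd : ∀ x, |ψ x| ≤ n := fun x => clamp_mem (g0 x) n hn
  have hclose : ∀ x, |ψ x - φ x| ≤ ‖φ x - g0 x‖ := by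
    intro x
    have := clamp_close (g0 x) (φ x) n (hbd x)
    rwa [Real.norm_eq_abs, abs_sub_comm (φ x)]
  -- integrability of the norm difference w.r.t. the various measures
  have hdmeas : Measurable (fun x => ‖φ x - g0 x‖) :=
    (hφ.sub g0.continuous.measurable).norm
  obtain ⟨C0, hC0⟩ := g0.bounded
  have hdbd : ∀ x, ‖φ x - g0 x‖ ≤ n + (dist (g0 x) (g0 hne.some) + ‖g0 hne.some‖) := by
    intro x
    have h1 : ‖g0 x‖ ≤ dist (g0 x) (g0 hne.some) + ‖g0 hne.some‖ := by
      have := dist_triangle (g0 x) (g0 hne.some) 0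
      simpa [dist_eq_norm] using this
    calc ‖φ x - g0 x‖ ≤ ‖φ x‖ + ‖g0 x‖ := norm_sub_le _ _
      _ ≤ n + (dist (g0 x) (g0 hne.some) + ‖g0 hne.some‖) := by
          have := hbd x
          rw [Real.norm_eq_abs]
          gcongr
  have hdbd' : ∀ x, ‖φ x - g0 x‖ ≤ n + (C0 + ‖g0 hne.some‖) := fun x =>
    le_trans (hdbd x) (by have := hC0 x hne.some; gcongr)
  have hd_int : ∀ (m : Measure (Fin d → AddCircle (1 : ℝ))) [IsFiniteMeasure m],
      Integrable (fun x => ‖φ x - g0 x‖) m := by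
    intro m _
    exact (integrable_const _).mono' hdmeas.aestronglyMeasurable
      (Filter.Eventually.of_forall fun x => by
        rw [Real.norm_eq_abs, abs_of_nonneg (norm_nonneg _)]; exact hdbd' x)
  -- the two L¹ bounds w.r.t. volume and w.r.t. ν
  have hsplit : ∫ x, ‖φ x - g0 x‖ ∂μ
      = (∫ x, ‖φ x - g0 x‖) + ∫ x, ‖φ x - g0 x‖ ∂ν := by
    rw [hμ_def]
    exact integral_add_measure (hd_int _) (hd_int _)
  have hvol_le : (∫ x, ‖φ x - g0 x‖) ≤ δ := by
    have h2 : 0 ≤ ∫ x, ‖φ x - g0 x‖ ∂ν := integral_nonneg fun x => norm_nonneg _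
    linarith [hg0, hsplit.symm.le]
  have hν_eq : ∫ x, ‖φ x - g0 x‖ ∂ν = ∫ x, ρ x * ‖φ x - g0 x‖ := by
    rw [hν_def, integral_withDensity_eq_integral_smul hρ_meas.real_toNNReal]
    apply integral_congr_ae
    filter_upwards with x
    rw [NNReal.smul_def, smul_eq_mul, Real.coe_toNNReal _ (hρ_nonneg x)]
  have hν_le : (∫ x, ρ x * ‖φ x - g0 x‖) ≤ δ := by
    have h2 : 0 ≤ ∫ x, ‖φ x - g0 x‖ := integral_nonneg fun x => norm_nonneg _
    rw [← hν_eq]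
    linarith [hg0, hsplit.symm.le]
  -- integrability facts w.r.t. volume
  have hψρ : Integrable (fun x => ψ x * ρ x) :=
    hρ_int.bdd_mul hψc.measurable.aestronglyMeasurable
      (c := n) (Filter.Eventually.of_forall fun x => by rw [Real.norm_eq_abs]; exact hψbd x)
  have hφρ : Integrable (fun x => φ x * ρ x) :=
    hρ_int.bdd_mul hφ.aestronglyMeasurable
      (c := n) (Filter.Eventually.of_forall fun x => by rw [Real.norm_eq_abs]; exact hbd x)
  have hψe : Integrable (fun x => lam x * (Real.exp (ψ x) - 1)) := by
    rw [← integrableOn_univ]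
    exact ((hlam_cont.mul ((Real.continuous_exp.comp hψc).sub
      continuous_const)).locallyIntegrable).integrableOn_isCompact isCompact_univ
  have hexp_bd : ∀ (u : ℝ), |u| ≤ n → ∀ x, ‖lam x * (Real.exp u - 1)‖ ≤ M * (Real.exp n + 1) := by
    intro u hu x
    rw [Real.norm_eq_abs, abs_mul, abs_of_pos (hlam_pos x)]
    have h1 : |Real.exp u - 1| ≤ Real.exp n + 1 := by
      rw [abs_le]
      have h2 : Real.exp u ≤ Real.exp n := Real.exp_le_exp.mpr (le_trans (le_abs_self u) hu)
      have h3 := Real.exp_pos u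
      constructor <;> linarith
    have := hMx x
    have := (hlam_pos x).le
    nlinarith [abs_nonneg (Real.exp u - 1)]
  have hφe : Integrable (fun x => lam x * (Real.exp (φ x) - 1)) := by
    refine (integrable_const (M * (Real.exp n + 1))).mono'
      ((hlam_cont.measurable.mul (((Real.measurable_exp.comp hφ)).sub
        measurable_const))).aestronglyMeasurable
      (Filter.Eventually.of_forall fun x => hexp_bd (φ x) (hbd x) x)
  have hcombφ : Integrable (fun x => φ x * ρ x - lam x * (Real.exp (φ x) - 1)) := hφρ.sub hφe
  have hcombψ : Integrable (fun x => ψ x * ρ x - lam x * (Real.exp (ψ x) - 1)) := hψρ.sub hψe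
  -- pointwise difference bound
  have hdiffmeas : Measurable (fun x => |φ x - ψ x|) := (hφ.sub hψc.measurable).abs
  have hD1 : Integrable (fun x => |φ x - ψ x| * ρ x) :=
    hρ_int.bdd_mul hdiffmeas.aestronglyMeasurable
      (c := 2 * n) (Filter.Eventually.of_forall fun x => by
        rw [Real.norm_eq_abs, abs_abs]
        calc |φ x - ψ x| ≤ |φ x| + |ψ x| := abs_sub _ _
          _ ≤ 2 * n := by linarith [hbd x, hψbd x])
  have hD2 : Integrable (fun x => |φ x - ψ x|) :=
    (integrable_const (2 * n)).mono' hdiffmeas.aestronglyMeasurable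
      (Filter.Eventually.of_forall fun x => by
        rw [Real.norm_eq_abs, abs_abs]
        calc |φ x - ψ x| ≤ |φ x| + |ψ x| := abs_sub _ _
          _ ≤ 2 * n := by linarith [hbd x, hψbd x])
  have hD : Integrable (fun x => |φ x - ψ x| * ρ x + (M * Real.exp n) * |φ x - ψ x|) :=
    hD1.add (hD2.const_mul _)
  have hpoint : ∀ x, (φ x * ρ x - lam x * (Real.exp (φ x) - 1))
      - (ψ x * ρ x - lam x * (Real.exp (ψ x) - 1))
      ≤ |φ x - ψ x| * ρ x + (M * Real.exp n) * |φ x - ψ x| := by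
    intro x
    have l1 : |Real.exp (φ x) - Real.exp (ψ x)| ≤ Real.exp n * |φ x - ψ x| :=
      exp_lip _ _ n (le_trans (le_abs_self _) (hbd x)) (le_trans (le_abs_self _) (hψbd x))
    have l2 : (φ x - ψ x) * ρ x ≤ |φ x - ψ x| * ρ x :=
      mul_le_mul_of_nonneg_right (le_abs_self _) (hρ_nonneg x)
    have l3 : lam x * (Real.exp (ψ x) - Real.exp (φ x)) ≤ (M * Real.exp n) * |φ x - ψ x| := by
      calc lam x * (Real.exp (ψ x) - Real.exp (φ x))
          ≤ lam x * |Real.exp (ψ x) - Real.exp (φ x)| :=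
            mul_le_mul_of_nonneg_left (le_abs_self _) (hlam_pos x).le
        _ = lam x * |Real.exp (φ x) - Real.exp (ψ x)| := by rw [abs_sub_comm]
        _ ≤ M * (Real.exp n * |φ x - ψ x|) := by
            apply mul_le_mul (hMx x) l1 (abs_nonneg _) hM0.le
        _ = (M * Real.exp n) * |φ x - ψ x| := by ring
    nlinarith
  -- integral comparison
  have hIle : (∫ x, (φ x * ρ x - lam x * (Real.exp (φ x) - 1)))
      ≤ (∫ x, (ψ x * ρ x - lam x * (Real.exp (ψ x) - 1))) + (ε : ℝ) := by
    have h1 : (∫ x, (φ x * ρ x - lam x * (Real.exp (φ x) - 1)))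
        - (∫ x, (ψ x * ρ x - lam x * (Real.exp (ψ x) - 1)))
        = ∫ x, ((φ x * ρ x - lam x * (Real.exp (φ x) - 1))
            - (ψ x * ρ x - lam x * (Real.exp (ψ x) - 1))) := (integral_sub hcombφ hcombψ).symm
    have h2 : (∫ x, ((φ x * ρ x - lam x * (Real.exp (φ x) - 1))
            - (ψ x * ρ x - lam x * (Real.exp (ψ x) - 1))))
        ≤ ∫ x, (|φ x - ψ x| * ρ x + (M * Real.exp n) * |φ x - ψ x|) :=
      integral_mono (hcombφ.sub hcombψ) hD hpoint
    have h3 : (∫ x, (|φ x - ψ x| * ρ x + (M * Real.exp n) * |φ x - ψ x|))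
        = (∫ x, |φ x - ψ x| * ρ x) + (M * Real.exp n) * ∫ x, |φ x - ψ x| := by
      rw [integral_add hD1 (hD2.const_mul _), integral_const_mul _ _]
    have h4 : (∫ x, |φ x - ψ x| * ρ x) ≤ δ := by
      refine le_trans (integral_mono hD1 (hρ_int.bdd_mul hdmeas.aestronglyMeasurable
        (c := n + (C0 + ‖g0 hne.some‖)) (Filter.Eventually.of_forall fun x => by
          rw [Real.norm_eq_abs, abs_of_nonneg (norm_nonneg _)]; exact hdbd' x))
        fun x => ?_) ?_
      · exact mul_le_mul_of_nonneg_right (by rw [abs_sub_comm]; exact hclose x) (hρ_nonneg x)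
      · refine le_trans (le_of_eq ?_) hν_le
        apply integral_congr_ae
        filter_upwards with x
        ring
    have h5 : (∫ x, |φ x - ψ x|) ≤ δ := by
      refine le_trans (integral_mono hD2 (hd_int volume) fun x => ?_) hvol_le
      rw [abs_sub_comm]; exact hclose x
    have h6 : δ + (M * Real.exp n) * δ = (ε : ℝ) := by
      rw [hδ_def, hK_def]
      field_simp
    have h7 : (M * Real.exp n) * (∫ x, |φ x - ψ x|) ≤ (M * Real.exp n) * δ :=
      mul_le_mul_of_nonneg_left h5 (by positivity)
    linarith
  -- conclusion
  have hsub : (∫ x, ψ x * ρ x) - ∫ x, lam x * (Real.exp (ψ x) - 1)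
      = ∫ x, (ψ x * ρ x - lam x * (Real.exp (ψ x) - 1)) := (integral_sub hψρ hψe).symm
  calc ENNReal.ofReal (∫ x, (φ x * ρ x - lam x * (Real.exp (φ x) - 1)))
      ≤ ENNReal.ofReal ((∫ x, (ψ x * ρ x - lam x * (Real.exp (ψ x) - 1))) + (ε : ℝ)) :=
        ENNReal.ofReal_le_ofReal hIle
    _ ≤ ENNReal.ofReal (∫ x, (ψ x * ρ x - lam x * (Real.exp (ψ x) - 1)))
          + ENNReal.ofReal (ε : ℝ) := ENNReal.ofReal_add_le
    _ = ENNReal.ofReal ((∫ x, (⟨ψ, hψc⟩ : C(Fin d → AddCircle (1 : ℝ), ℝ)) x * ρ x)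
          - ∫ x, lam x * (Real.exp ((⟨ψ, hψc⟩ : C(Fin d → AddCircle (1 : ℝ), ℝ)) x) - 1))
          + (ε : ℝ≥0∞) := by
        simp only [ContinuousMap.coe_mk]
        rw [hsub, ENNReal.ofReal_coe_nnreal]
    _ ≤ (⨆ f : C(Fin d → AddCircle (1 : ℝ), ℝ),
          ENNReal.ofReal ((∫ x, f x * ρ x) - ∫ x, lam x * (Real.exp (f x) - 1))) + (ε : ℝ≥0∞) := by
        gcongr
        exact le_iSup (fun f : C(Fin d → AddCircle (1 : ℝ), ℝ) =>
          ENNReal.ofReal ((∫ x, f x * ρ x) - ∫ x, lam x * (Real.exp (f x) - 1))) _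

/-- On the torus `Λ = [0,1]^d`, for continuous strictly positive `λ`
and integrable nonnegative `ρ`, the Legendre transform of
`f ↦ ∫ λ(e^f − 1)` evaluated at `ρ` (sup over continuous `f`, an equality in `[0,∞]`)
equals `∫ [ρ log ρ − λ log λ − (log λ + 1)(ρ − λ)] = ∫ [ρ log(ρ/λ) − ρ + λ]`
(with convention `0·log 0 = 0`, which holds by `Real.log 0 = 0`); moreover this
rate functional vanishes iff `ρ = λ` almost everywhere. -/
theorem stmt_8 (d : ℕ) (hd : 1 ≤ d)
    (lam : (Fin d → AddCircle (1 : ℝ)) → ℝ)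
    (hlam_cont : Continuous lam) (hlam_pos : ∀ x, 0 < lam x)
    (ρ : (Fin d → AddCircle (1 : ℝ)) → ℝ)
    (hρ_meas : Measurable ρ) (hρ_nonneg : ∀ x, 0 ≤ ρ x)
    (hρ_int : Integrable ρ) :
    (⨆ f : C(Fin d → AddCircle (1 : ℝ), ℝ),
        ENNReal.ofReal ((∫ x, f x * ρ x) - ∫ x, lam x * (Real.exp (f x) - 1)))
        = ∫⁻ x, ENNReal.ofReal
            (ρ x * Real.log (ρ x) - lam x * Real.log (lam x)
              - (Real.log (lam x) + 1) * (ρ x - lam x))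
    ∧ (∫⁻ x, ENNReal.ofReal
            (ρ x * Real.log (ρ x) - lam x * Real.log (lam x)
              - (Real.log (lam x) + 1) * (ρ x - lam x)))
        = ∫⁻ x, ENNReal.ofReal (ρ x * Real.log (ρ x / lam x) - ρ x + lam x)
    ∧ ((∫⁻ x, ENNReal.ofReal (ρ x * Real.log (ρ x / lam x) - ρ x + lam x)) = 0
        ↔ ρ =ᵐ[volume] lam) := by
  have hg_meas : Measurable (fun x => ρ x * Real.log (ρ x / lam x) - ρ x + lam x) :=
    ((hρ_meas.mul ((hρ_meas.div hlam_cont.measurable).log)).sub hρ_meas).add hlam_cont.measurable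
  -- Part 2 : the two forms of the integrand coincide
  have part2 : (∫⁻ x, ENNReal.ofReal
            (ρ x * Real.log (ρ x) - lam x * Real.log (lam x)
              - (Real.log (lam x) + 1) * (ρ x - lam x)))
        = ∫⁻ x, ENNReal.ofReal (ρ x * Real.log (ρ x / lam x) - ρ x + lam x) :=
    lintegral_congr fun x => by rw [forms_eq _ _ (hρ_nonneg x) (hlam_pos x)]
  -- Part 3 : vanishing iff ρ = lam a.e.
  have part3 : ((∫⁻ x, ENNReal.ofReal (ρ x * Real.log (ρ x / lam x) - ρ x + lam x)) = 0
        ↔ ρ =ᵐ[volume] lam) := by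
    rw [lintegral_eq_zero_iff' hg_meas.ennreal_ofReal.aemeasurable]
    constructor
    · intro h
      filter_upwards [h] with x hx
      simp only [Pi.zero_apply, ENNReal.ofReal_eq_zero] at hx
      exact (g_eq_zero_iff _ _ (hρ_nonneg x) (hlam_pos x)).mp
        (le_antisymm hx (g_nonneg _ _ (hρ_nonneg x) (hlam_pos x)))
    · intro h
      filter_upwards [h] with x hx
      simp only [Pi.zero_apply, ENNReal.ofReal_eq_zero]
      exact le_of_eq ((g_eq_zero_iff _ _ (hρ_nonneg x) (hlam_pos x)).mpr hx)
  -- Part 1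
  have upper : (⨆ f : C(Fin d → AddCircle (1 : ℝ), ℝ),
        ENNReal.ofReal ((∫ x, f x * ρ x) - ∫ x, lam x * (Real.exp (f x) - 1)))
      ≤ ∫⁻ x, ENNReal.ofReal (ρ x * Real.log (ρ x / lam x) - ρ x + lam x) := by
    apply iSup_le
    intro f
    have hfρ : Integrable (fun x => f x * ρ x) :=
      hρ_int.bdd_mul f.continuous.measurable.aestronglyMeasurable
        (c := ‖f‖) (Filter.Eventually.of_forall fun x => f.norm_coe_le_norm x)
    have hfe : Integrable (fun x => lam x * (Real.exp (f x) - 1)) := by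
      rw [← integrableOn_univ]
      exact ((hlam_cont.mul ((Real.continuous_exp.comp f.continuous).sub
        continuous_const)).locallyIntegrable).integrableOn_isCompact isCompact_univ
    rw [← integral_sub hfρ hfe]
    by_cases htop : (∫⁻ x, ENNReal.ofReal (ρ x * Real.log (ρ x / lam x) - ρ x + lam x)) = ⊤
    · rw [htop]; exact le_top
    · have hg_int : Integrable (fun x => ρ x * Real.log (ρ x / lam x) - ρ x + lam x) := by
        refine ⟨hg_meas.aestronglyMeasurable, ?_⟩
        rw [HasFiniteIntegral]
        have heq : (∫⁻ x, (‖ρ x * Real.log (ρ x / lam x) - ρ x + lam x‖ₑ : ℝ≥0∞))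
            = ∫⁻ x, ENNReal.ofReal (ρ x * Real.log (ρ x / lam x) - ρ x + lam x) :=
          lintegral_congr fun x =>
            Real.enorm_eq_ofReal (g_nonneg _ _ (hρ_nonneg x) (hlam_pos x))
        rw [heq]
        exact lt_top_iff_ne_top.mpr htop
      have hle : (∫ x, (f x * ρ x - lam x * (Real.exp (f x) - 1)))
          ≤ ∫ x, (ρ x * Real.log (ρ x / lam x) - ρ x + lam x) :=
        integral_mono (hfρ.sub hfe) hg_int
          (fun x => key_ineq _ _ _ (hρ_nonneg x) (hlam_pos x))
      calc ENNReal.ofReal (∫ x, (f x * ρ x - lam x * (Real.exp (f x) - 1)))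
          ≤ ENNReal.ofReal (∫ x, (ρ x * Real.log (ρ x / lam x) - ρ x + lam x)) :=
            ENNReal.ofReal_le_ofReal hle
        _ = ∫⁻ x, ENNReal.ofReal (ρ x * Real.log (ρ x / lam x) - ρ x + lam x) :=
            ofReal_integral_eq_lintegral_ofReal hg_int
              (Filter.Eventually.of_forall fun x => g_nonneg _ _ (hρ_nonneg x) (hlam_pos x))
  have lower : (∫⁻ x, ENNReal.ofReal (ρ x * Real.log (ρ x / lam x) - ρ x + lam x))
      ≤ ⨆ f : C(Fin d → AddCircle (1 : ℝ), ℝ),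
        ENNReal.ofReal ((∫ x, f x * ρ x) - ∫ x, lam x * (Real.exp (f x) - 1)) := by
    set fn : ℕ → (Fin d → AddCircle (1 : ℝ)) → ℝ := fun n x =>
      if ρ x = 0 then -(n : ℝ)
      else max (-(n : ℝ)) (min (n : ℝ) (Real.log (ρ x / lam x))) with hfn_def
    have hfn_meas : ∀ n, Measurable (fn n) := fun n =>
      Measurable.ite (hρ_meas (measurableSet_singleton 0)) measurable_const
        (measurable_const.max (measurable_const.min
          ((hρ_meas.div hlam_cont.measurable).log)))
    have hfn_bd : ∀ n x, |fn n x| ≤ (n : ℝ) := by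
      intro n x
      by_cases h : ρ x = 0
      · simp [hfn_def, h]
      · simp only [hfn_def, if_neg h]
        exact clamp_mem _ _ (Nat.cast_nonneg n)
    have hmono : ∀ x, Monotone (fun n : ℕ =>
        fn n x * ρ x - lam x * (Real.exp (fn n x) - 1)) := by
      intro x a b hab
      simp only
      by_cases h : ρ x = 0
      · simp only [hfn_def, if_pos h, h, mul_zero, zero_sub, zero_mul]
        have h1 : Real.exp (-(b : ℝ)) ≤ Real.exp (-(a : ℝ)) :=
          Real.exp_le_exp.mpr (neg_le_neg (Nat.cast_le.mpr hab))
        nlinarith [hlam_pos x]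
      · have hρx : 0 < ρ x := (hρ_nonneg x).lt_of_ne' h
        set T := Real.log (ρ x / lam x) with hT_def
        have hlT : lam x * Real.exp T = ρ x := by
          rw [hT_def, Real.exp_log (div_pos hρx (hlam_pos x))]
          field_simp [(hlam_pos x).ne']
        rcases le_or_gt 0 T with hT | hT
        · have hfk : ∀ k : ℕ, fn k x = min (k : ℝ) T := by
            intro k
            simp only [hfn_def, if_neg h]
            exact max_eq_right (le_trans (neg_nonpos.mpr (Nat.cast_nonneg k))
              (le_min (Nat.cast_nonneg k) hT))
          rw [hfk a, hfk b]
          apply phi_mono_left _ _ _ _ (hlam_pos x)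
          · exact min_le_min (Nat.cast_le.mpr hab) le_rfl
          · calc lam x * Real.exp (min (b : ℝ) T) ≤ lam x * Real.exp T :=
                mul_le_mul_of_nonneg_left (Real.exp_le_exp.mpr (min_le_right _ _))
                  (hlam_pos x).le
              _ = ρ x := hlT
        · have hfk : ∀ k : ℕ, fn k x = max (-(k : ℝ)) T := by
            intro k
            simp only [hfn_def, if_neg h]
            rw [min_eq_right (le_trans hT.le (Nat.cast_nonneg k))]
          rw [hfk a, hfk b]
          apply phi_mono_right _ _ _ _ (hlam_pos x)
          · exact max_le_max (neg_le_neg (Nat.cast_le.mpr hab)) le_rfl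
          · calc ρ x = lam x * Real.exp T := hlT.symm
              _ ≤ lam x * Real.exp (max (-(b : ℝ)) T) :=
                mul_le_mul_of_nonneg_left (Real.exp_le_exp.mpr (le_max_right _ _))
                  (hlam_pos x).le
    have hcomb0 : ∀ x, fn 0 x * ρ x - lam x * (Real.exp (fn 0 x) - 1) = 0 := by
      intro x
      have h0 : fn 0 x = 0 := by
        by_cases h : ρ x = 0
        · simp [hfn_def, h]
        · simp only [hfn_def, if_neg h, Nat.cast_zero, neg_zero]
          exact max_eq_left (min_le_left _ _)
      simp [h0]
    have hnonneg : ∀ n x, 0 ≤ fn n x * ρ x - lam x * (Real.exp (fn n x) - 1) := by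
      intro n x
      have := hmono x (Nat.zero_le n)
      simpa [hcomb0 x] using this
    have htend : ∀ x, Filter.Tendsto
        (fun n : ℕ => fn n x * ρ x - lam x * (Real.exp (fn n x) - 1))
        Filter.atTop (nhds (ρ x * Real.log (ρ x / lam x) - ρ x + lam x)) := by
      intro x
      by_cases h : ρ x = 0
      · have h1 : Filter.Tendsto (fun n : ℕ => Real.exp (-(n : ℝ)))
            Filter.atTop (nhds 0) :=
          Real.tendsto_exp_atBot.comp
            (Filter.tendsto_neg_atTop_atBot.comp tendsto_natCast_atTop_atTop)
        have h2 : Filter.Tendsto (fun n : ℕ => -(lam x * (Real.exp (-(n : ℝ)) - 1)))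
            Filter.atTop (nhds (-(lam x * (0 - 1)))) :=
          ((tendsto_const_nhds.mul (h1.sub tendsto_const_nhds))).neg
        have heqf : (fun n : ℕ => fn n x * ρ x - lam x * (Real.exp (fn n x) - 1))
            = fun n : ℕ => -(lam x * (Real.exp (-(n : ℝ)) - 1)) := by
          funext n
          simp [hfn_def, h]
        rw [heqf]
        have : ρ x * Real.log (ρ x / lam x) - ρ x + lam x = -(lam x * (0 - 1)) := by
          rw [h]; ring
        rw [this]
        exact h2
      · have hρx : 0 < ρ x := (hρ_nonneg x).lt_of_ne' h
        have hlT : lam x * Real.exp (Real.log (ρ x / lam x)) = ρ x := by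
          rw [Real.exp_log (div_pos hρx (hlam_pos x))]
          field_simp [(hlam_pos x).ne']
        obtain ⟨N, hN⟩ := exists_nat_ge |Real.log (ρ x / lam x)|
        apply Filter.Tendsto.congr' ?_ (tendsto_const_nhds
          (x := ρ x * Real.log (ρ x / lam x) - ρ x + lam x))
        filter_upwards [Filter.eventually_ge_atTop N] with n hn
        have hNn : |Real.log (ρ x / lam x)| ≤ (n : ℝ) :=
          le_trans hN (Nat.cast_le.mpr hn)
        rw [abs_le] at hNn
        have hfn_eq : fn n x = Real.log (ρ x / lam x) := by
          simp only [hfn_def, if_neg h]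
          rw [min_eq_right hNn.2, max_eq_right hNn.1]
        rw [hfn_eq]
        nlinarith [hlT]
    have hL : Filter.Tendsto
        (fun n : ℕ => ∫⁻ x, ENNReal.ofReal (fn n x * ρ x - lam x * (Real.exp (fn n x) - 1)))
        Filter.atTop
        (nhds (∫⁻ x, ENNReal.ofReal (ρ x * Real.log (ρ x / lam x) - ρ x + lam x))) := by
      apply lintegral_tendsto_of_tendsto_of_monotone
      · intro n
        exact (((hfn_meas n).mul hρ_meas).sub (hlam_cont.measurable.mul
          ((Real.measurable_exp.comp (hfn_meas n)).sub measurable_const))).ennreal_ofReal.aemeasurable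
      · exact Filter.Eventually.of_forall fun x => fun a b hab =>
          ENNReal.ofReal_le_ofReal (hmono x hab)
      · exact Filter.Eventually.of_forall fun x =>
          (ENNReal.continuous_ofReal.tendsto _).comp (htend x)
    refine le_of_tendsto' hL fun n => ?_
    have hfρ : Integrable (fun x => fn n x * ρ x) :=
      hρ_int.bdd_mul (hfn_meas n).aestronglyMeasurable
        (c := (n : ℝ)) (Filter.Eventually.of_forall fun x => by rw [Real.norm_eq_abs]; exact hfn_bd n x)
    obtain ⟨M, hM⟩ := (isCompact_range hlam_cont).bddAbove
    have hMx : ∀ x, lam x ≤ M := fun x => hM ⟨x, rfl⟩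
    have hfe : Integrable (fun x => lam x * (Real.exp (fn n x) - 1)) := by
      refine (integrable_const (M * (Real.exp (n : ℝ) + 1))).mono'
        (hlam_cont.measurable.mul ((Real.measurable_exp.comp (hfn_meas n)).sub
          measurable_const)).aestronglyMeasurable
        (Filter.Eventually.of_forall fun x => ?_)
      rw [Real.norm_eq_abs, abs_mul, abs_of_pos (hlam_pos x)]
      have h1 : |Real.exp (fn n x) - 1| ≤ Real.exp (n : ℝ) + 1 := by
        rw [abs_le]
        have h2 : Real.exp (fn n x) ≤ Real.exp (n : ℝ) :=
          Real.exp_le_exp.mpr (le_trans (le_abs_self _) (hfn_bd n x))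
        have h3 := Real.exp_pos (fn n x)
        constructor <;> linarith
      have h4 := hMx x
      have h5 := (hlam_pos x).le
      nlinarith [abs_nonneg (Real.exp (fn n x) - 1)]
    have hint : Integrable (fun x => fn n x * ρ x - lam x * (Real.exp (fn n x) - 1)) :=
      hfρ.sub hfe
    rw [← ofReal_integral_eq_lintegral_ofReal hint
      (Filter.Eventually.of_forall fun x => hnonneg n x)]
    exact lower_aux d lam hlam_cont hlam_pos ρ hρ_meas hρ_nonneg hρ_int
      (fn n) (hfn_meas n) (n : ℝ) (Nat.cast_nonneg n) (hfn_bd n)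
  exact ⟨(le_antisymm upper lower).trans part2.symm, part2, part3⟩
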